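/- Let s, t ∈ Bⁿ(T₀) be adjacent level-n triangles, with family trees s = s_n, s_{n−1}, …, s₁, s₀ = T₀ and t = t_n, t_{n−1}, …, t₁, t₀ = T₀ (so s_k ∈ B^k(T₀) and s_{k+1} ∈ B(s_k), and similarly for t). Let m = max{k : 0 ≤ k ≤ n, s_m = t_m} (well defined since s₀ = t₀). Then s_k = t_k for all 0 ≤ k ≤ m, and s_k is adjacent to t_k for all m < k ≤ n. -/

import Mathlib

/-- A point of the plane. -/
abbrev Pt := ℝ × ℝ

/-- A triangle in the plane: an ordered triple of points. -/
structure Triangle where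
  v : Fin 3 → Pt

/-- A triangle is nondegenerate if its vertices are affinely independent. -/
def Triangle.Nondeg (T : Triangle) : Prop := AffineIndependent ℝ T.v

/-- The barycenter of a triangle. -/
noncomputable def Triangle.bary (T : Triangle) : Pt :=
  (3 : ℝ)⁻¹ • (T.v 0 + T.v 1 + T.v 2)

/-- The child `[aᵢ, (aᵢ+aⱼ)/2, b]` of a triangle produced by barycentric subdivision. -/
noncomputable def Triangle.child (T : Triangle) (i j : Fin 3) : Triangle :=
  ⟨![T.v i, (2 : ℝ)⁻¹ • (T.v i + T.v j), T.bary]⟩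

/-- The barycentric subdivision of a triangle: the set of its six children. -/
noncomputable def BSub (T : Triangle) : Set Triangle :=
  {t | ∃ i j : Fin 3, i ≠ j ∧ t = T.child i j}

/-- `n`-fold iterated barycentric subdivision `Bⁿ(T₀)`. -/
noncomputable def BIter (T₀ : Triangle) : ℕ → Set Triangle
  | 0 => {T₀}
  | n + 1 => ⋃ t ∈ BIter T₀ n, BSub t

/-- The set of sides of a triangle (as subsets of the plane). -/
def Triangle.sides (T : Triangle) : Set (Set Pt) :=
  {e | ∃ i j : Fin 3, i ≠ j ∧ e = segment ℝ (T.v i) (T.v j)}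

/-- The boundary of a triangle: the union of its three sides. -/
def Triangle.bdry (T : Triangle) : Set Pt :=
  segment ℝ (T.v 0) (T.v 1) ∪ segment ℝ (T.v 1) (T.v 2) ∪ segment ℝ (T.v 0) (T.v 2)

/-- Two triangles are adjacent if they are distinct and share a common side. -/
def Adjacent (s t : Triangle) : Prop := s ≠ t ∧ ∃ e, e ∈ s.sides ∧ e ∈ t.sides

/-! ### Auxiliary development -/

theorem nondeg_iff_w (T : Triangle) :
    T.Nondeg ↔ ∀ a : Fin 3 → ℝ, a 0 + a 1 + a 2 = 0 →
      a 0 • T.v 0 + a 1 • T.v 1 + a 2 • T.v 2 = 0 → ∀ i, a i = 0 := by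
  rw [Triangle.Nondeg, affineIndependent_iff_of_fintype]
  constructor
  · intro h a hsum heq i
    refine h a ?_ ?_ i
    · rw [Fin.sum_univ_three]; exact hsum
    · rw [Finset.weightedVSub_eq_linear_combination _ (by rw [Fin.sum_univ_three]; exact hsum),
        Fin.sum_univ_three]; exact heq
  · intro h w hsum heq i
    rw [Fin.sum_univ_three] at hsum
    rw [Finset.weightedVSub_eq_linear_combination _ (by rw [Fin.sum_univ_three]; linarith),
        Fin.sum_univ_three] at heq
    exact h w hsum heq i

/-- The third index of `Fin 3`. -/
def thd (i j : Fin 3) : Fin 3 := -(i + j)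
lemma thd_cover : ∀ i j : Fin 3, i ≠ j → ∀ c, c = i ∨ c = j ∨ c = thd i j := by decide
lemma thd_ne : ∀ i j : Fin 3, i ≠ j → thd i j ≠ i ∧ thd i j ≠ j := by decide
@[simp] lemma thd01 : thd 0 1 = 2 := rfl
@[simp] lemma thd02 : thd 0 2 = 1 := rfl
@[simp] lemma thd10 : thd 1 0 = 2 := rfl
@[simp] lemma thd12 : thd 1 2 = 0 := rfl
@[simp] lemma thd20 : thd 2 0 = 1 := rfl
@[simp] lemma thd21 : thd 2 1 = 0 := rfl

/-- A linear combination of the vertices of a triangle. -/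
noncomputable def cmb (T : Triangle) (w : Fin 3 → ℝ) : Pt :=
  w 0 • T.v 0 + w 1 • T.v 1 + w 2 • T.v 2

/-- The points of (the convex hull of) a triangle. -/
noncomputable def Tpts (T : Triangle) : Set Pt :=
  {x | ∃ w : Fin 3 → ℝ, (∀ i, 0 ≤ w i) ∧ w 0 + w 1 + w 2 = 1 ∧ x = cmb T w}

@[simp] lemma childv0 (T : Triangle) (i j : Fin 3) : (T.child i j).v 0 = T.v i := rfl
@[simp] lemma childv1 (T : Triangle) (i j : Fin 3) :
    (T.child i j).v 1 = (2 : ℝ)⁻¹ • (T.v i + T.v j) := rfl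
@[simp] lemma childv2 (T : Triangle) (i j : Fin 3) : (T.child i j).v 2 = T.bary := rfl

lemma coords_unique {T : Triangle} (hT : T.Nondeg) {w w' : Fin 3 → ℝ}
    (h1 : w 0 + w 1 + w 2 = 1) (h1' : w' 0 + w' 1 + w' 2 = 1)
    (he : cmb T w = cmb T w') : ∀ i, w i = w' i := by
  intro i
  have := (nondeg_iff_w T).1 hT (fun c => w c - w' c) (by linarith)
    (by simp only [sub_smul, cmb] at he ⊢; rw [← sub_eq_zero] at he; rw [← he]; abel) i
  linarith [this]

lemma sum_perm3 (f : Fin 3 → ℝ) {i j : Fin 3} (hij : i ≠ j) :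
    f i + f j + f (thd i j) = f 0 + f 1 + f 2 := by
  fin_cases i <;> fin_cases j <;> simp_all <;> ring

lemma cmb_perm (T : Triangle) {i j : Fin 3} (hij : i ≠ j) (w : Fin 3 → ℝ) :
    cmb T w = w i • T.v i + w j • T.v j + w (thd i j) • T.v (thd i j) := by
  fin_cases i <;> fin_cases j <;> simp_all [cmb] <;> abel

lemma bary_perm (T : Triangle) {i j : Fin 3} (hij : i ≠ j) :
    T.bary = (3 : ℝ)⁻¹ • (T.v i + T.v j + T.v (thd i j)) := by
  fin_cases i <;> fin_cases j <;> simp_all [Triangle.bary] <;> module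

lemma mem_seg {a b : ℝ} (ha : 0 ≤ a) (hb : 0 ≤ b) (hab : a + b = 1) (p q : Pt) :
    a • p + b • q ∈ segment ℝ p q := ⟨a, b, ha, hb, hab, rfl⟩

lemma seg_mem_iff {p q x : Pt} : x ∈ segment ℝ p q ↔
    ∃ a b : ℝ, 0 ≤ a ∧ 0 ≤ b ∧ a + b = 1 ∧ a • p + b • q = x := Iff.rfl

/-- Coordinates (w.r.t. the parent) of a point of a child triangle. -/
lemma mem_child_coords {T : Triangle} {i j : Fin 3} (hij : i ≠ j) {x : Pt}
    (hx : x ∈ Tpts (T.child i j)) :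
    ∃ w : Fin 3 → ℝ, (∀ c, 0 ≤ w c) ∧ w 0 + w 1 + w 2 = 1 ∧ x = cmb T w ∧
      w j ≤ w i ∧ w (thd i j) ≤ w j := by
  obtain ⟨u, hu0, hu1, rfl⟩ := hx
  have hji : j ≠ i := Ne.symm hij
  have hli : thd i j ≠ i := (thd_ne i j hij).1
  have hlj : thd i j ≠ j := (thd_ne i j hij).2
  refine ⟨fun c => (if c = i then u 0 + u 1 / 2 else if c = j then u 1 / 2 else 0) + u 2 / 3,
    ?_, ?_, ?_, ?_, ?_⟩
  · intro c
    rcases thd_cover i j hij c with hc | hc | hc <;> rw [hc] <;>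
      simp only [eq_self_iff_true, if_true, if_neg hji, if_neg hli, if_neg hlj] <;>
      [linarith [hu0 0, hu0 1, hu0 2]; linarith [hu0 1, hu0 2]; linarith [hu0 2]]
  · rw [← sum_perm3 (fun c => (if c = i then u 0 + u 1 / 2 else if c = j then u 1 / 2 else 0) + u 2 / 3) hij]
    simp only [eq_self_iff_true, if_true, if_neg hji, if_neg hli, if_neg hlj]
    linarith
  · rw [cmb_perm T hij]
    simp only [eq_self_iff_true, if_true, if_neg hji, if_neg hli, if_neg hlj, cmb, childv0, childv1, childv2,
      bary_perm T hij, Fin.isValue]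
    module
  · simp only [eq_self_iff_true, if_true, if_neg hji, if_neg hli, if_neg hlj]
    linarith [hu0 0]
  · simp only [eq_self_iff_true, if_true, if_neg hji, if_neg hli, if_neg hlj]
    linarith [hu0 1]

/-- Membership in the segment from `vᵢ` to the barycenter. -/
lemma cmb_mem_seg_i_bary {T : Triangle} {i j : Fin 3} (hij : i ≠ j) {w : Fin 3 → ℝ}
    (h0 : ∀ c, 0 ≤ w c) (h1 : w 0 + w 1 + w 2 = 1) (hji : w j ≤ w i)
    (h : w j = w (thd i j)) : cmb T w ∈ segment ℝ (T.v i) T.bary := by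
  have hs := sum_perm3 w hij
  have := mem_seg (a := w i - w j) (b := 3 * w (thd i j)) (by linarith)
    (by linarith [h0 (thd i j)]) (by linarith) (T.v i) T.bary
  convert this using 1
  rw [cmb_perm T hij, bary_perm T hij, h]
  module

/-- Membership in the segment from the midpoint of side `ij` to the barycenter. -/
lemma cmb_mem_seg_m_bary {T : Triangle} {i j : Fin 3} (hij : i ≠ j) {w : Fin 3 → ℝ}
    (h0 : ∀ c, 0 ≤ w c) (h1 : w 0 + w 1 + w 2 = 1) (hlj : w (thd i j) ≤ w j)
    (h : w i = w j) : cmb T w ∈ segment ℝ ((2:ℝ)⁻¹ • (T.v i + T.v j)) T.bary := by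
  have hs := sum_perm3 w hij
  have := mem_seg (a := 2 * (w j - w (thd i j))) (b := 3 * w (thd i j)) (by linarith)
    (by linarith [h0 (thd i j)]) (by linarith) ((2:ℝ)⁻¹ • (T.v i + T.v j)) T.bary
  convert this using 1
  rw [cmb_perm T hij, bary_perm T hij, h]
  module

/-- Membership in the segment from `vᵢ` to the midpoint of side `ij`. -/
lemma cmb_mem_seg_i_m {T : Triangle} {i j : Fin 3} (hij : i ≠ j) {w : Fin 3 → ℝ}
    (h0 : ∀ c, 0 ≤ w c) (h1 : w 0 + w 1 + w 2 = 1) (hji : w j ≤ w i)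
    (h : w (thd i j) = 0) : cmb T w ∈ segment ℝ (T.v i) ((2:ℝ)⁻¹ • (T.v i + T.v j)) := by
  have hs := sum_perm3 w hij
  have := mem_seg (a := w i - w j) (b := 2 * w j) (by linarith)
    (by linarith [h0 j]) (by linarith) (T.v i) ((2:ℝ)⁻¹ • (T.v i + T.v j))
  convert this using 1
  rw [cmb_perm T hij, h]
  module

/-- If all three coordinates coincide, the point is the barycenter. -/
lemma cmb_eq_bary {T : Triangle} {i j : Fin 3} (hij : i ≠ j) {w : Fin 3 → ℝ}
    (h1 : w 0 + w 1 + w 2 = 1) (ha : w i = w j) (hb : w j = w (thd i j)) :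
    cmb T w = T.bary := by
  have hs := sum_perm3 w hij
  have h3 : w i = 3⁻¹ := by linarith
  have h4 : w j = 3⁻¹ := by linarith
  have h5 : w (thd i j) = 3⁻¹ := by linarith
  rw [cmb_perm T hij, bary_perm T hij, h3, h4, h5]
  module

/-- Coordinates of a point of a side of a triangle. -/
lemma seg_coords {T : Triangle} {a b : Fin 3} (hab : a ≠ b) {z : Pt}
    (hz : z ∈ segment ℝ (T.v a) (T.v b)) :
    ∃ w : Fin 3 → ℝ, (∀ c, 0 ≤ w c) ∧ w 0 + w 1 + w 2 = 1 ∧ z = cmb T w ∧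
      w (thd a b) = 0 := by
  obtain ⟨s, r, hs, hr, hsr, rfl⟩ := hz
  have hba : b ≠ a := Ne.symm hab
  have hla : thd a b ≠ a := (thd_ne a b hab).1
  have hlb : thd a b ≠ b := (thd_ne a b hab).2
  refine ⟨fun c => if c = a then s else if c = b then r else 0, ?_, ?_, ?_, ?_⟩
  · intro c
    rcases thd_cover a b hab c with hc | hc | hc <;> rw [hc] <;>
      simp only [eq_self_iff_true, if_true, if_neg hba, if_neg hla, if_neg hlb] <;> linarith
  · rw [← sum_perm3 (fun c => if c = a then s else if c = b then r else 0) hab]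
    simp only [eq_self_iff_true, if_true, if_neg hba, if_neg hla, if_neg hlb]
    linarith
  · rw [cmb_perm T hab]
    simp only [eq_self_iff_true, if_true, if_neg hba, if_neg hla, if_neg hlb]
    module
  · simp only [if_neg hla, if_neg hlb]

/-- Sides are contained in the triangle. -/
lemma seg_subset_pts {T : Triangle} {a b : Fin 3} (hab : a ≠ b) :
    segment ℝ (T.v a) (T.v b) ⊆ Tpts T := by
  intro z hz
  obtain ⟨w, h0, h1, rfl, -⟩ := seg_coords hab hz
  exact ⟨w, h0, h1, rfl⟩

/-- A child is contained in its parent. -/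
lemma child_subset {T : Triangle} {i j : Fin 3} (hij : i ≠ j) :
    Tpts (T.child i j) ⊆ Tpts T := by
  intro x hx
  obtain ⟨w, h0, h1, rfl, -, -⟩ := mem_child_coords hij hx
  exact ⟨w, h0, h1, rfl⟩

/-- Vertices of a nondegenerate triangle are distinct. -/
lemma vertex_ne {T : Triangle} (hT : T.Nondeg) {a b : Fin 3} (hab : a ≠ b) :
    T.v a ≠ T.v b := fun h => hab (hT.injective h)

/-- A child of a nondegenerate triangle is nondegenerate. -/
lemma child_nondeg {T : Triangle} (hT : T.Nondeg) {i j : Fin 3} (hij : i ≠ j) :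
    (T.child i j).Nondeg := by
  rw [nondeg_iff_w]
  intro a hsum heq
  have hji : j ≠ i := Ne.symm hij
  have hli : thd i j ≠ i := (thd_ne i j hij).1
  have hlj : thd i j ≠ j := (thd_ne i j hij).2
  set w : Fin 3 → ℝ :=
    fun c => (if c = i then a 0 + a 1 / 2 else if c = j then a 1 / 2 else 0) + a 2 / 3 with hw
  have hwi : w i = a 0 + a 1 / 2 + a 2 / 3 := by
    simp only [hw, eq_self_iff_true, if_true]
  have hwj : w j = a 1 / 2 + a 2 / 3 := by
    simp only [hw, if_neg hji, eq_self_iff_true, if_true]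
  have hwl : w (thd i j) = a 2 / 3 := by
    simp only [hw, if_neg hli, if_neg hlj]; ring
  have hwsum : w 0 + w 1 + w 2 = 0 := by
    rw [← sum_perm3 w hij, hwi, hwj, hwl]; linarith
  have hcmb : w 0 • T.v 0 + w 1 • T.v 1 + w 2 • T.v 2 = 0 := by
    have : cmb T w = 0 := by
      rw [cmb_perm T hij, hwi, hwj, hwl]
      rw [show (0 : Pt) = a 0 • (T.child i j).v 0 + a 1 • (T.child i j).v 1 +
        a 2 • (T.child i j).v 2 from heq.symm]
      simp only [childv0, childv1, childv2, bary_perm T hij]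
      module
    simpa [cmb] using this
  have hz := (nondeg_iff_w T).1 hT w hwsum hcmb
  have h2 : a 2 = 0 := by have := hz (thd i j); rw [hwl] at this; linarith
  have h1 : a 1 = 0 := by have := hz j; rw [hwj] at this; linarith
  have h0 : a 0 = 0 := by have := hz i; rw [hwi] at this; linarith
  intro c; fin_cases c <;> assumption

/-- Children of a nondegenerate triangle are determined by their index pair. -/
lemma child_inj {T : Triangle} (hT : T.Nondeg) {i j i' j' : Fin 3} (hij : i ≠ j)
    (hij' : i' ≠ j') (h : T.child i j = T.child i' j') : i = i' ∧ j = j' := by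
  have h0 : T.v i = T.v i' := by
    have := congrArg (fun t => Triangle.v t 0) h; simpa using this
  have hii : i = i' := hT.injective h0
  have h1 : (2:ℝ)⁻¹ • (T.v i + T.v j) = (2:ℝ)⁻¹ • (T.v i' + T.v j') := by
    have := congrArg (fun t => Triangle.v t 1) h; simpa using this
  subst hii
  have h2 : T.v j = T.v j' := by
    have := smul_right_injective Pt (by norm_num : (2:ℝ)⁻¹ ≠ 0) h1
    have h3 := congrArg (fun z => z - T.v i) this
    simpa [add_sub_cancel_left] using h3
  exact ⟨rfl, hT.injective h2⟩

/-- Planar determinant. -/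
def det2 (u w : Pt) : ℝ := u.1 * w.2 - u.2 * w.1

/-- A nondegenerate triangle has nonzero determinant. -/
lemma nondeg_det {T : Triangle} (hT : T.Nondeg) :
    det2 (T.v 1 - T.v 0) (T.v 2 - T.v 0) ≠ 0 := by
  intro h
  set u : Pt := T.v 1 - T.v 0 with hu
  set w : Pt := T.v 2 - T.v 0 with hw
  have key : ∀ α β : ℝ, α • u + β • w = 0 → β = 0 ∧ α = 0 := by
    intro α β hαβ
    have hsum : ((-α - β) + α + β : ℝ) = 0 := by ring
    have hcmb : (-α - β) • T.v 0 + α • T.v 1 + β • T.v 2 = 0 := by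
      rw [show (0 : Pt) = α • u + β • w from hαβ.symm, hu, hw]; module
    have hz := (nondeg_iff_w T).1 hT ![(-α - β), α, β] (by simpa using hsum) (by simpa using hcmb)
    exact ⟨by simpa using hz 2, by simpa using hz 1⟩
  rcases eq_or_ne u.1 0 with hu1 | hu1
  · rcases eq_or_ne u.2 0 with hu2 | hu2
    · -- u = 0
      have : (1:ℝ) • u + (0:ℝ) • w = 0 := by
        have : u = 0 := Prod.ext hu1 hu2
        simp [this]
      exact one_ne_zero (key 1 0 this).2
    · -- u.1 = 0, u.2 ≠ 0
      have h1 : u.2 * w.1 = 0 := by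
        simp only [det2, hu1, zero_mul, zero_sub, neg_eq_zero] at h; exact h
      have : (-w.2) • u + u.2 • w = 0 := by
        apply Prod.ext <;> simp only [Prod.fst_add, Prod.snd_add, Prod.smul_fst, Prod.smul_snd,
          Prod.fst_zero, Prod.snd_zero, smul_eq_mul] <;>
          [(rw [hu1, h1]; ring); ring]
      exact hu2 (key _ _ this).1
  · have : (-w.1) • u + u.1 • w = 0 := by
      apply Prod.ext <;> simp only [Prod.fst_add, Prod.snd_add, Prod.smul_fst, Prod.smul_snd,
        Prod.fst_zero, Prod.snd_zero, smul_eq_mul] <;> simp only [det2] at h <;> nlinarith [h]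
    
    exact hu1 (key _ _ this).1

/-- Three points of a common segment are collinear. -/
lemma coll3 {p q z1 z2 z3 : Pt} (h1 : z1 ∈ segment ℝ p q) (h2 : z2 ∈ segment ℝ p q)
    (h3 : z3 ∈ segment ℝ p q) : det2 (z2 - z1) (z3 - z1) = 0 := by
  obtain ⟨a1, b1, -, -, hab1, rfl⟩ := h1
  obtain ⟨a2, b2, -, -, hab2, rfl⟩ := h2
  obtain ⟨a3, b3, -, -, hab3, rfl⟩ := h3
  have e1 : b1 = 1 - a1 := by linarith
  have e2 : b2 = 1 - a2 := by linarith
  have e3 : b3 = 1 - a3 := by linarith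
  subst e1 e2 e3
  simp only [det2, Prod.fst_add, Prod.snd_add, Prod.smul_fst, Prod.smul_snd, Prod.fst_sub,
    Prod.snd_sub, smul_eq_mul]
  ring

/-- Quadratic Bézier curve through the triangle. -/
noncomputable def bez (T : Triangle) (t : ℝ) : Pt :=
  ((1-t)^2) • T.v 0 + (2*t*(1-t)) • T.v 1 + (t^2) • T.v 2

lemma bez_mem {T : Triangle} {t : ℝ} (h0 : 0 ≤ t) (h1 : t ≤ 1) : bez T t ∈ Tpts T := by
  refine ⟨![((1-t)^2), (2*t*(1-t)), (t^2)], ?_, by simp; ring, ?_⟩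
  · intro c; fin_cases c <;> simp <;> nlinarith
  · simp [cmb, bez]

lemma bez_det (T : Triangle) (t1 t2 t3 : ℝ) :
    det2 (bez T t2 - bez T t1) (bez T t3 - bez T t1) =
      (2*(t2-t1)*(t3-t1)*(t3-t2)) * det2 (T.v 1 - T.v 0) (T.v 2 - T.v 0) := by
  simp only [bez, det2, Prod.fst_add, Prod.snd_add, Prod.smul_fst, Prod.smul_snd, Prod.fst_sub,
    Prod.snd_sub, smul_eq_mul]
  ring

/-- A nondegenerate triangle is not contained in the boundary of any triangle. -/
lemma not_subset_bdry {c : Triangle} (hc : c.Nondeg) (T : Triangle) :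
    ¬ (Tpts c ⊆ T.bdry) := by
  classical
  intro hsub
  set x : Fin 7 → Pt := fun r => bez c ((r : ℝ) / 7) with hx
  have hxmem : ∀ r : Fin 7, x r ∈ T.bdry := by
    intro r
    apply hsub
    apply bez_mem
    · positivity
    · have : (r : ℝ) ≤ 6 := by exact_mod_cast Nat.lt_succ_iff.1 r.isLt
      linarith
  set f : Fin 7 → Fin 3 := fun r =>
    if x r ∈ segment ℝ (T.v 0) (T.v 1) then 0
    else if x r ∈ segment ℝ (T.v 1) (T.v 2) then 1 else 2 with hf
  have hseg : ∀ r : Fin 7, ∃ p q : Pt, x r ∈ segment ℝ p q ∧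
      ∀ r', f r' = f r → x r' ∈ segment ℝ p q := by
    intro r
    by_cases h01 : x r ∈ segment ℝ (T.v 0) (T.v 1)
    · refine ⟨T.v 0, T.v 1, h01, fun r' hr' => ?_⟩
      have : f r = 0 := by simp [hf, h01]
      rw [this] at hr'
      by_contra hmem
      have : f r' ≠ 0 := by simp [hf, hmem]; split <;> simp
      exact this hr'
    · by_cases h12 : x r ∈ segment ℝ (T.v 1) (T.v 2)
      · refine ⟨T.v 1, T.v 2, h12, fun r' hr' => ?_⟩
        have : f r = 1 := by simp [hf, h01, h12]
        rw [this] at hr'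
        by_contra hmem
        have : f r' ≠ 1 := by simp [hf, hmem]; split <;> simp
        exact this hr'
      · refine ⟨T.v 0, T.v 2, ?_, fun r' hr' => ?_⟩
        · rcases hxmem r with (h | h) | h
          · exact absurd h h01
          · exact absurd h h12
          · exact h
        · have : f r = 2 := by simp [hf, h01, h12]
          rw [this] at hr'
          rcases hxmem r' with (h | h) | h
          · have : f r' = 0 := by simp [hf, h]
            rw [this] at hr'; exact absurd hr' (by decide)
          · have : f r' ≠ 2 := by
              simp only [hf]
              split
              · simp
              · simp [h]
            exact absurd hr' this
          · exact h
  obtain ⟨y, -, hy⟩ := Finset.exists_lt_card_fiber_of_mul_lt_card_of_maps_to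
    (s := (Finset.univ : Finset (Fin 7))) (t := (Finset.univ : Finset (Fin 3)))
    (f := f) (fun a _ => Finset.mem_univ (f a)) (n := 2) (by simp)
  rw [Finset.two_lt_card] at hy
  obtain ⟨r1, hr1, r2, hr2, r3, hr3, h12, h13, h23⟩ := hy
  simp only [Finset.mem_filter, Finset.mem_univ, true_and] at hr1 hr2 hr3
  obtain ⟨p, q, hp1, hall⟩ := hseg r1
  have m2 := hall r2 (by rw [hr2, hr1])
  have m3 := hall r3 (by rw [hr3, hr1])
  have hcol := coll3 hp1 m2 m3
  rw [hx] at hcol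
  rw [bez_det] at hcol
  have hdet := nondeg_det hc
  have ht : ∀ a b : Fin 7, a ≠ b → ((a : ℝ)/7 - (b : ℝ)/7) ≠ 0 := by
    intro a b hab h
    apply hab
    have : (a : ℝ) = (b : ℝ) := by linarith
    exact Fin.ext (by exact_mod_cast this)
  rcases mul_eq_zero.1 hcol with h | h
  · have h2 := ht r2 r1 (Ne.symm h12)
    have h3 := ht r3 r1 (Ne.symm h13)
    have h4 := ht r3 r2 (Ne.symm h23)
    have : (2:ℝ) * ((r2:ℝ)/7 - (r1:ℝ)/7) * ((r3:ℝ)/7 - (r1:ℝ)/7) * ((r3:ℝ)/7 - (r2:ℝ)/7) ≠ 0 := by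
      positivity
    exact this h
  · exact hdet h

lemma pair_cases : ∀ a b a' b' : Fin 3, a ≠ b → a' ≠ b' →
    (a' = a ∧ b' = b) ∨ (a' = b ∧ b' = a) ∨
    (∃ c : Fin 3, (c = a ∨ c = b) ∧ (c = a' ∨ c = b') ∧
      ∀ d, (d = a ∨ d = b) → (d = a' ∨ d = b') → d = c) := by decide

lemma cmb_single {T : Triangle} {w : Fin 3 → ℝ} {c : Fin 3}
    (hz : ∀ d, d ≠ c → w d = 0) (h1 : w 0 + w 1 + w 2 = 1) : cmb T w = T.v c := by
  fin_cases c
  · have e1 : w 1 = 0 := hz 1 (by decide)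
    have e2 : w 2 = 0 := hz 2 (by decide)
    have e0 : w 0 = 1 := by linarith
    simp [cmb, e0, e1, e2]
  · have e1 : w 0 = 0 := hz 0 (by decide)
    have e2 : w 2 = 0 := hz 2 (by decide)
    have e0 : w 1 = 1 := by linarith
    simp [cmb, e0, e1, e2]
  · have e1 : w 0 = 0 := hz 0 (by decide)
    have e2 : w 1 = 0 := hz 1 (by decide)
    have e0 : w 2 = 1 := by linarith
    simp [cmb, e0, e1, e2]

/-- Two sides of a nondegenerate triangle sharing two distinct points are equal. -/
lemma side_eq {T : Triangle} (hT : T.Nondeg) {a b a' b' : Fin 3} (hab : a ≠ b)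
    (hab' : a' ≠ b') {x y : Pt} (hxy : x ≠ y)
    (hx1 : x ∈ segment ℝ (T.v a) (T.v b)) (hx2 : x ∈ segment ℝ (T.v a') (T.v b'))
    (hy1 : y ∈ segment ℝ (T.v a) (T.v b)) (hy2 : y ∈ segment ℝ (T.v a') (T.v b')) :
    segment ℝ (T.v a) (T.v b) = segment ℝ (T.v a') (T.v b') := by
  rcases pair_cases a b a' b' hab hab' with ⟨h1, h2⟩ | ⟨h1, h2⟩ | ⟨c, hc1, hc2, hc3⟩
  · rw [h1, h2]
  · rw [h1, h2, segment_symm]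
  · exfalso
    have key : ∀ z : Pt, z ∈ segment ℝ (T.v a) (T.v b) → z ∈ segment ℝ (T.v a') (T.v b') →
        z = T.v c := by
      intro z hz1 hz2
      obtain ⟨w, h0, h1, rfl, hw1⟩ := seg_coords hab hz1
      obtain ⟨w', h0', h1', hze, hw2⟩ := seg_coords hab' hz2
      have huniq := coords_unique hT h1 h1' hze
      have hz : ∀ d, d ≠ c → w d = 0 := by
        intro d hd
        by_cases hdab : d = a ∨ d = b
        · by_cases hdab' : d = a' ∨ d = b'
          · exact absurd (hc3 d hdab hdab') hd
          · push_neg at hdab'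
            have : d = thd a' b' := by
              rcases thd_cover a' b' hab' d with h | h | h
              · exact absurd h hdab'.1
              · exact absurd h hdab'.2
              · exact h
            rw [huniq d, this]; exact hw2
        · push_neg at hdab
          have : d = thd a b := by
            rcases thd_cover a b hab d with h | h | h
            · exact absurd h hdab.1
            · exact absurd h hdab.2
            · exact h
          rw [this]; exact hw1
      exact cmb_single hz h1
    exact hxy ((key x hx1 hx2).trans (key y hy1 hy2).symm)

/-- A point of a child lying on the parent's boundary lies on segment `[vᵢ, mᵢⱼ]`,
which is half of the parent's side `[vᵢ, vⱼ]`. -/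
lemma child_bdry {T : Triangle} (hT : T.Nondeg) {i j : Fin 3} (hij : i ≠ j) {x : Pt}
    (hx : x ∈ Tpts (T.child i j)) (hb : x ∈ T.bdry) :
    x ∈ segment ℝ (T.v i) ((2:ℝ)⁻¹ • (T.v i + T.v j)) := by
  obtain ⟨w, h0, h1, rfl, hji, hlj⟩ := mem_child_coords hij hx
  have hzero : ∃ d, (d = i ∨ d = j ∨ d = thd i j) ∧ w d = 0 := by
    rcases hb with (hs | hs) | hs
    · obtain ⟨w', h0', h1', he', hz'⟩ := seg_coords (show (0:Fin 3) ≠ 1 by decide) hs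
      exact ⟨thd 0 1, thd_cover i j hij _, by rw [coords_unique hT h1 h1' he' _]; exact hz'⟩
    · obtain ⟨w', h0', h1', he', hz'⟩ := seg_coords (show (1:Fin 3) ≠ 2 by decide) hs
      exact ⟨thd 1 2, thd_cover i j hij _, by rw [coords_unique hT h1 h1' he' _]; exact hz'⟩
    · obtain ⟨w', h0', h1', he', hz'⟩ := seg_coords (show (0:Fin 3) ≠ 2 by decide) hs
      exact ⟨thd 0 2, thd_cover i j hij _, by rw [coords_unique hT h1 h1' he' _]; exact hz'⟩
  obtain ⟨d, hd, hdz⟩ := hzero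
  have hsum := sum_perm3 w hij
  rcases hd with rfl | rfl | rfl
  · exfalso
    have : w j = 0 := le_antisymm (hdz ▸ hji) (h0 j)
    have : w (thd d j) = 0 := le_antisymm (this ▸ hlj) (h0 _)
    linarith [h0 j, h0 (thd d j), hdz, ‹w j = 0›]
  · have hl : w (thd i d) = 0 := le_antisymm (hdz ▸ hlj) (h0 _)
    exact cmb_mem_seg_i_m hij h0 h1 hji hl
  · exact cmb_mem_seg_i_m hij h0 h1 hji hdz

lemma pair_rel : ∀ i j i' j' : Fin 3, i ≠ j → i' ≠ j' → ¬(i = i' ∧ j = j') →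
    (i' = i ∧ j' = thd i j) ∨ (i' = j ∧ j' = i) ∨
    (i' = j ∧ j' = thd i j) ∨ (i' = thd i j ∧ j' = i) ∨ (i' = thd i j ∧ j' = j) := by decide

lemma thd_invol : ∀ i j : Fin 3, i ≠ j → thd i (thd i j) = j ∧ thd j (thd i j) = i ∧
    thd (thd i j) i = j ∧ thd (thd i j) j = i := by decide

/-- Intersection of distinct children of one triangle. -/
lemma child_inter {T : Triangle} (hT : T.Nondeg) {i j i' j' : Fin 3} (hij : i ≠ j)
    (hij' : i' ≠ j') (hne : ¬(i = i' ∧ j = j')) :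
    (∃ a0 b0 : Fin 3, a0 ≠ b0 ∧
      segment ℝ ((T.child i j).v a0) ((T.child i j).v b0) =
        segment ℝ ((T.child i' j').v a0) ((T.child i' j').v b0) ∧
      Tpts (T.child i j) ∩ Tpts (T.child i' j') ⊆
        segment ℝ ((T.child i j).v a0) ((T.child i j).v b0)) ∨
    Tpts (T.child i j) ∩ Tpts (T.child i' j') ⊆ {T.bary} := by
  have coords : ∀ x ∈ Tpts (T.child i j) ∩ Tpts (T.child i' j'),
      ∃ w : Fin 3 → ℝ, (∀ c, 0 ≤ w c) ∧ w 0 + w 1 + w 2 = 1 ∧ x = cmb T w ∧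
        w j ≤ w i ∧ w (thd i j) ≤ w j ∧ w j' ≤ w i' ∧ w (thd i' j') ≤ w j' := by
    rintro x ⟨hx1, hx2⟩
    obtain ⟨w, h0, h1, rfl, c1, c2⟩ := mem_child_coords hij hx1
    obtain ⟨w', h0', h1', he', c1', c2'⟩ := mem_child_coords hij' hx2
    have hu := coords_unique hT h1 h1' he'
    exact ⟨w, h0, h1, rfl, c1, c2, by rw [hu j', hu i']; exact c1',
      by rw [hu (thd i' j'), hu j']; exact c2'⟩
  rcases pair_rel i j i' j' hij hij' hne with ⟨e1, e2⟩ | ⟨e1, e2⟩ | ⟨e1, e2⟩ | ⟨e1, e2⟩ | ⟨e1, e2⟩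
  · -- i' = i, j' = thd i j : common side [vᵢ, bary]
    left
    refine ⟨0, 2, by decide, by rw [childv0, childv0, childv2, childv2, e1], ?_⟩
    intro x hx
    obtain ⟨w, h0, h1, hxe, c1, c2, c1', c2'⟩ := coords x hx
    rw [e1, e2] at c1' c2'
    rw [(thd_invol i j hij).1] at c2'
    have hjl : w j = w (thd i j) := le_antisymm (by linarith) c2
    rw [childv0, childv2, hxe]
    exact cmb_mem_seg_i_bary hij h0 h1 c1 hjl
  · -- i' = j, j' = i : common side [mᵢⱼ, bary]
    left
    refine ⟨1, 2, by decide, ?_, ?_⟩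
    · rw [childv1, childv1, childv2, childv2, e1, e2, add_comm]
    · intro x hx
      obtain ⟨w, h0, h1, hxe, c1, c2, c1', c2'⟩ := coords x hx
      rw [e1, e2] at c1' c2'
      have hij2 : w i = w j := le_antisymm c1' c1
      rw [childv1, childv2, hxe]
      exact cmb_mem_seg_m_bary hij h0 h1 c2 hij2
  all_goals right
  all_goals intro x hx
  all_goals obtain ⟨w, h0, h1, hxe, c1, c2, c1', c2'⟩ := coords x hx
  all_goals rw [e1, e2] at c1' c2'
  · -- i' = j, j' = thd i j
    rw [(thd_invol i j hij).2.1] at c2'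
    have h1' : w i = w j := le_antisymm (by linarith) c1
    have h2' : w j = w (thd i j) := le_antisymm (by linarith) c2
    simp only [Set.mem_singleton_iff, hxe]
    exact cmb_eq_bary hij h1 h1' h2'
  · -- i' = thd i j, j' = i
    rw [(thd_invol i j hij).2.2.1] at c2'
    have h1' : w j = w (thd i j) := le_antisymm (by linarith) c2
    have h2' : w i = w j := le_antisymm (by linarith) c1
    simp only [Set.mem_singleton_iff, hxe]
    exact cmb_eq_bary hij h1 h2' h1'
  · -- i' = thd i j, j' = j
    rw [(thd_invol i j hij).2.2.2] at c2'
    have h1' : w j = w (thd i j) := le_antisymm (by linarith) c2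
    have h2' : w i = w j := le_antisymm (by linarith) c1
    simp only [Set.mem_singleton_iff, hxe]
    exact cmb_eq_bary hij h1 h2' h1'

/-- The endpoints of a nondegenerate segment are determined. -/
lemma segeq {x y x' y' : Pt} (hxy : x ≠ y)
    (h : segment ℝ x y = segment ℝ x' y') :
    (x' = x ∧ y' = y) ∨ (x' = y ∧ y' = x) := by
  have hx' : x' ∈ segment ℝ x y := by rw [h]; exact left_mem_segment _ _ _
  have hy' : y' ∈ segment ℝ x y := by rw [h]; exact right_mem_segment _ _ _
  have hx : x ∈ segment ℝ x' y' := by rw [← h]; exact left_mem_segment _ _ _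
  have hy : y ∈ segment ℝ x' y' := by rw [← h]; exact right_mem_segment _ _ _
  obtain ⟨a1, b1, ha1, hb1, hab1, e1⟩ := hx'
  obtain ⟨a2, b2, ha2, hb2, hab2, e2⟩ := hy'
  obtain ⟨s1, s2, hs1, hs2, hs, e3⟩ := hx
  obtain ⟨t1, t2, ht1, ht2, ht, e4⟩ := hy
  have hyx : y - x ≠ 0 := sub_ne_zero.2 (Ne.symm hxy)
  rw [← e1, ← e2] at e3 e4
  have hB : (s1 * b1 + s2 * b2) • (y - x) = 0 := by
    have h5 : ((s1 * a1 + s2 * a2) + (s1 * b1 + s2 * b2) : ℝ) = 1 := by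
      calc (s1 * a1 + s2 * a2) + (s1 * b1 + s2 * b2) = s1 * (a1 + b1) + s2 * (a2 + b2) := by ring
        _ = 1 := by rw [hab1, hab2]; linarith
    calc (s1 * b1 + s2 * b2) • (y - x)
        = (s1 • (a1 • x + b1 • y) + s2 • (a2 • x + b2 • y)) -
            ((s1 * a1 + s2 * a2) + (s1 * b1 + s2 * b2)) • x := by module
      _ = 0 := by rw [e3, h5, one_smul, sub_self]
  have hD : ((t1 * b1 + t2 * b2) - 1) • (y - x) = 0 := by
    have h5 : ((t1 * a1 + t2 * a2) + (t1 * b1 + t2 * b2) : ℝ) = 1 := by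
      calc (t1 * a1 + t2 * a2) + (t1 * b1 + t2 * b2) = t1 * (a1 + b1) + t2 * (a2 + b2) := by ring
        _ = 1 := by rw [hab1, hab2]; linarith
    calc ((t1 * b1 + t2 * b2) - 1) • (y - x)
        = (t1 • (a1 • x + b1 • y) + t2 • (a2 • x + b2 • y)) -
            ((t1 * a1 + t2 * a2) + (t1 * b1 + t2 * b2)) • x - (y - x) := by module
      _ = y - ((1:ℝ)) • x - (y - x) := by rw [e4, h5]
      _ = 0 := by rw [one_smul]; abel
  have hB0 : s1 * b1 + s2 * b2 = 0 := by
    rcases smul_eq_zero.1 hB with h' | h'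
    · exact h'
    · exact absurd h' hyx
  have hD1 : t1 * b1 + t2 * b2 = 1 := by
    rcases smul_eq_zero.1 hD with h' | h'
    · linarith
    · exact absurd h' hyx
  have hble1 : b1 ≤ 1 := by linarith
  have hble2 : b2 ≤ 1 := by linarith
  have hsb1 : 0 ≤ s1 * b1 := mul_nonneg hs1 hb1
  have hsb2 : 0 ≤ s2 * b2 := mul_nonneg hs2 hb2
  have hb11 : b1 = 1 ∨ b2 = 1 := by
    by_contra hcon
    push_neg at hcon
    have e0 : t1 * (1 - b1) + t2 * (1 - b2) = 0 := by ring_nf; linear_combination ht - hD1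
    have p1 : 0 ≤ t1 * (1 - b1) := mul_nonneg ht1 (by linarith)
    have p2 : 0 ≤ t2 * (1 - b2) := mul_nonneg ht2 (by linarith)
    have q1 : t1 * (1 - b1) = 0 := by linarith
    have q2 : t2 * (1 - b2) = 0 := by linarith
    have r1 : t1 = 0 := by
      rcases mul_eq_zero.1 q1 with h' | h'
      · exact h'
      · exact absurd (by linarith : b1 = 1) hcon.1
    have r2 : t2 = 0 := by
      rcases mul_eq_zero.1 q2 with h' | h'
      · exact h'
      · exact absurd (by linarith : b2 = 1) hcon.2
    linarith
  rcases hb11 with hb | hb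
  · right
    have ha0 : a1 = 0 := by linarith
    have hx'y : x' = y := by rw [← e1, ha0, hb, zero_smul, one_smul, zero_add]
    have hs10 : s1 = 0 := by nlinarith
    have hs21 : s2 = 1 := by linarith
    have hb20 : b2 = 0 := by nlinarith
    have ha21 : a2 = 1 := by linarith
    have : y' = x := by rw [← e2, ha21, hb20, zero_smul, one_smul, add_zero]
    exact ⟨hx'y, this⟩
  · left
    have ha20 : a2 = 0 := by linarith
    have hy'y : y' = y := by rw [← e2, ha20, hb, zero_smul, one_smul, zero_add]
    have hs20 : s2 = 0 := by nlinarith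
    have hs11 : s1 = 1 := by linarith
    have hb10 : b1 = 0 := by nlinarith
    have ha11 : a1 = 1 := by linarith
    have : x' = x := by rw [← e1, ha11, hb10, zero_smul, one_smul, add_zero]
    exact ⟨this, hy'y⟩

/-- A half side is contained in the side. -/
lemma seg_half_sub {p q : Pt} : segment ℝ p ((2:ℝ)⁻¹ • (p + q)) ⊆ segment ℝ p q := by
  rintro z ⟨a, b, ha, hb, hab, rfl⟩
  have := mem_seg (a := a + b/2) (b := b/2) (by linarith) (by linarith) (by linarith) p q
  convert this using 1
  module

/-- Opposite halves of a segment meet only in the midpoint. -/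
lemma halves_inter {p q z : Pt} (hpq : p ≠ q)
    (h1 : z ∈ segment ℝ p ((2:ℝ)⁻¹ • (p + q)))
    (h2 : z ∈ segment ℝ q ((2:ℝ)⁻¹ • (p + q))) : z = (2:ℝ)⁻¹ • (p + q) := by
  obtain ⟨a1, b1, ha1, hb1, hab1, e1⟩ := h1
  obtain ⟨a2, b2, ha2, hb2, hab2, e2⟩ := h2
  have key : ((a1 + a2)/2) • (p - q) = 0 := by
    have hb1' : b1 = 1 - a1 := by linarith
    have hb2' : b2 = 1 - a2 := by linarith
    calc ((a1 + a2)/2) • (p - q)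
        = (a1 • p + (1 - a1) • ((2:ℝ)⁻¹ • (p + q))) -
          (a2 • q + (1 - a2) • ((2:ℝ)⁻¹ • (p + q))) := by module
      _ = z - z := by rw [← hb1', ← hb2', e1, e2]
      _ = 0 := sub_self z
  have hpq' : p - q ≠ 0 := sub_ne_zero.2 hpq
  have ha12 : (a1 + a2)/2 = 0 := by
    rcases smul_eq_zero.1 key with h' | h'
    · exact h'
    · exact absurd h' hpq'
  have ha10 : a1 = 0 := by linarith
  have hb11 : b1 = 1 := by linarith
  rw [← e1, ha10, hb11, zero_smul, one_smul, zero_add]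

/-- Any segment between two vertices is contained in the boundary. -/
lemma seg_sub_bdry (T : Triangle) : ∀ a b : Fin 3, a ≠ b →
    segment ℝ (T.v a) (T.v b) ⊆ T.bdry := by
  have h01 : segment ℝ (T.v 0) (T.v 1) ⊆ T.bdry := fun z hz => Or.inl (Or.inl hz)
  have h12 : segment ℝ (T.v 1) (T.v 2) ⊆ T.bdry := fun z hz => Or.inl (Or.inr hz)
  have h02 : segment ℝ (T.v 0) (T.v 2) ⊆ T.bdry := fun z hz => Or.inr hz
  intro a b hab
  fin_cases a <;> fin_cases b <;> simp_all <;> rw [segment_symm] <;> assumption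

lemma mem_BIter_succ {T₀ c : Triangle} {k : ℕ} :
    c ∈ BIter T₀ (k+1) ↔ ∃ P ∈ BIter T₀ k, c ∈ BSub P := by
  simp [BIter]

/-- The inductive invariant for iterated barycentric subdivision. -/
def GoodT (T₀ : Triangle) (k : ℕ) : Prop :=
  (∀ P ∈ BIter T₀ k, P.Nondeg) ∧
  (∀ P ∈ BIter T₀ k, ∀ Q ∈ BIter T₀ k, P ≠ Q → Tpts P ∩ Tpts Q ⊆ P.bdry ∩ Q.bdry) ∧
  (∀ P ∈ BIter T₀ k, ∀ Q ∈ BIter T₀ k, ∀ S ∈ P.sides, ∀ S' ∈ Q.sides,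
    (∃ x y : Pt, x ≠ y ∧ x ∈ S ∩ S' ∧ y ∈ S ∩ S') → S = S')

/-- A side of a child whose two distinct points lie on the parent's boundary is the half
side `[vᵢ, mᵢⱼ]`. -/
lemma child_side_half {P : Triangle} (hP : P.Nondeg) {i j : Fin 3} (hij : i ≠ j) {σ : Set Pt}
    (hσ : σ ∈ (P.child i j).sides) {x y : Pt} (hxy : x ≠ y) (hxσ : x ∈ σ) (hyσ : y ∈ σ)
    (hxb : x ∈ P.bdry) (hyb : y ∈ P.bdry) :
    σ = segment ℝ (P.v i) ((2:ℝ)⁻¹ • (P.v i + P.v j)) := by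
  obtain ⟨a, b, hab, rfl⟩ := hσ
  have hx01 : x ∈ segment ℝ (P.v i) ((2:ℝ)⁻¹ • (P.v i + P.v j)) :=
    child_bdry hP hij (seg_subset_pts hab hxσ) hxb
  have hy01 : y ∈ segment ℝ (P.v i) ((2:ℝ)⁻¹ • (P.v i + P.v j)) :=
    child_bdry hP hij (seg_subset_pts hab hyσ) hyb
  have := side_eq (child_nondeg hP hij) hab (show (0 : Fin 3) ≠ 1 by decide) hxy
    hxσ (by simpa using hx01) hyσ (by simpa using hy01)
  simpa using this

lemma good_zero {T₀ : Triangle} (hT₀ : T₀.Nondeg) : GoodT T₀ 0 := by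
  have hmem : ∀ P, P ∈ BIter T₀ 0 → P = T₀ := by
    intro P hP; simpa [BIter] using hP
  refine ⟨fun P hP => (hmem P hP) ▸ hT₀, ?_, ?_⟩
  · intro P hP Q hQ hne
    exact absurd ((hmem P hP).trans (hmem Q hQ).symm) hne
  · rintro P hP Q hQ S ⟨a, b, hab, rfl⟩ S' ⟨a', b', hab', rfl⟩ ⟨x, y, hxy, hx, hy⟩
    rw [hmem P hP] at hx hy ⊢
    rw [hmem Q hQ] at hx hy ⊢
    exact side_eq hT₀ hab hab' hxy hx.1 hx.2 hy.1 hy.2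

lemma good_succ {T₀ : Triangle} {k : ℕ} (G : GoodT T₀ k) : GoodT T₀ (k+1) := by
  obtain ⟨G1, G2, G3⟩ := G
  have hnd : ∀ c ∈ BIter T₀ (k+1), c.Nondeg := by
    rintro c hc
    obtain ⟨P, hP, i, j, hij, rfl⟩ := mem_BIter_succ.1 hc
    exact child_nondeg (G1 P hP) hij
  refine ⟨hnd, ?_, ?_⟩
  · -- interior disjointness
    rintro c hc d hd hcd x ⟨hxc, hxd⟩
    obtain ⟨P, hP, i, j, hij, rfl⟩ := mem_BIter_succ.1 hc
    obtain ⟨Q, hQ, i', j', hij', rfl⟩ := mem_BIter_succ.1 hd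
    rcases eq_or_ne P Q with rfl | hPQ
    · -- same parent
      have hne : ¬(i = i' ∧ j = j') := by
        rintro ⟨rfl, rfl⟩; exact hcd rfl
      rcases child_inter (G1 P hP) hij hij' hne with ⟨a0, b0, hab0, hKeq, hKsub⟩ | hbar
      · have hxK := hKsub ⟨hxc, hxd⟩
        constructor
        · -- in bdry of child i j
          have : segment ℝ ((P.child i j).v a0) ((P.child i j).v b0) ⊆ (P.child i j).bdry :=
            seg_sub_bdry _ a0 b0 hab0
          exact this hxK
        · have : segment ℝ ((P.child i' j').v a0) ((P.child i' j').v b0) ⊆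
              (P.child i' j').bdry := seg_sub_bdry _ a0 b0 hab0
          exact this (hKeq ▸ hxK)
      · have hxb : x = P.bary := hbar ⟨hxc, hxd⟩
        constructor
        · apply seg_sub_bdry (P.child i j) 1 2 (by decide)
          rw [hxb, show P.bary = (P.child i j).v 2 from rfl]
          exact right_mem_segment _ _ _
        · apply seg_sub_bdry (P.child i' j') 1 2 (by decide)
          rw [hxb, show P.bary = (P.child i' j').v 2 from rfl]
          exact right_mem_segment _ _ _
    · -- different parents
      have hxPQ := G2 P hP Q hQ hPQ ⟨child_subset hij hxc, child_subset hij' hxd⟩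
      constructor
      · have := child_bdry (G1 P hP) hij hxc hxPQ.1
        apply seg_sub_bdry (P.child i j) 0 1 (by decide)
        simpa using this
      · have := child_bdry (G1 Q hQ) hij' hxd hxPQ.2
        apply seg_sub_bdry (Q.child i' j') 0 1 (by decide)
        simpa using this
  · -- edge-to-edge
    rintro c hc d hd S hS S' hS' ⟨x, y, hxy, hx, hy⟩
    obtain ⟨P, hP, i, j, hij, rfl⟩ := mem_BIter_succ.1 hc
    obtain ⟨Q, hQ, i', j', hij', rfl⟩ := mem_BIter_succ.1 hd
    rcases eq_or_ne (P.child i j) (Q.child i' j') with hcd | hcd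
    · -- same child
      obtain ⟨a, b, hab, rfl⟩ := hS
      obtain ⟨a', b', hab', rfl⟩ := hS'
      rw [← hcd] at hx hy ⊢
      exact side_eq (child_nondeg (G1 P hP) hij) hab hab' hxy hx.1 hx.2 hy.1 hy.2
    rcases eq_or_ne P Q with rfl | hPQ
    · -- same parent, different children
      have hne : ¬(i = i' ∧ j = j') := by
        rintro ⟨rfl, rfl⟩; exact hcd rfl
      have hxc : x ∈ Tpts (P.child i j) := by
        obtain ⟨a, b, hab, rfl⟩ := hS; exact seg_subset_pts hab hx.1
      have hxd : x ∈ Tpts (P.child i' j') := by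
        obtain ⟨a', b', hab', rfl⟩ := hS'; exact seg_subset_pts hab' hx.2
      have hyc : y ∈ Tpts (P.child i j) := by
        obtain ⟨a, b, hab, rfl⟩ := hS; exact seg_subset_pts hab hy.1
      have hyd : y ∈ Tpts (P.child i' j') := by
        obtain ⟨a', b', hab', rfl⟩ := hS'; exact seg_subset_pts hab' hy.2
      rcases child_inter (G1 P hP) hij hij' hne with ⟨a0, b0, hab0, hKeq, hKsub⟩ | hbar
      · have hxK := hKsub ⟨hxc, hxd⟩
        have hyK := hKsub ⟨hyc, hyd⟩
        obtain ⟨a, b, hab, rfl⟩ := hS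
        obtain ⟨a', b', hab', rfl⟩ := hS'
        have e1 := side_eq (child_nondeg (G1 P hP) hij) hab hab0 hxy hx.1 hxK hy.1 hyK
        have e2 := side_eq (child_nondeg (G1 P hP) hij') hab' hab0 hxy hx.2 (hKeq ▸ hxK)
          hy.2 (hKeq ▸ hyK)
        rw [e1, hKeq, e2]
      · have hxb : x = P.bary := hbar ⟨hxc, hxd⟩
        have hyb : y = P.bary := hbar ⟨hyc, hyd⟩
        exact absurd (hxb.trans hyb.symm) hxy
    · -- different parents
      have hxPQ := G2 P hP Q hQ hPQ ⟨child_subset hij (by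
          obtain ⟨a, b, hab, rfl⟩ := hS; exact seg_subset_pts hab hx.1),
        child_subset hij' (by
          obtain ⟨a', b', hab', rfl⟩ := hS'; exact seg_subset_pts hab' hx.2)⟩
      have hyPQ := G2 P hP Q hQ hPQ ⟨child_subset hij (by
          obtain ⟨a, b, hab, rfl⟩ := hS; exact seg_subset_pts hab hy.1),
        child_subset hij' (by
          obtain ⟨a', b', hab', rfl⟩ := hS'; exact seg_subset_pts hab' hy.2)⟩
      have hσ : S = segment ℝ (P.v i) ((2:ℝ)⁻¹ • (P.v i + P.v j)) :=
        child_side_half (G1 P hP) hij hS hxy hx.1 hy.1 hxPQ.1 hyPQ.1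
      have hσ' : S' = segment ℝ (Q.v i') ((2:ℝ)⁻¹ • (Q.v i' + Q.v j')) :=
        child_side_half (G1 Q hQ) hij' hS' hxy hx.2 hy.2 hxPQ.2 hyPQ.2
      -- the big sides coincide
      have hSfull : segment ℝ (P.v i) (P.v j) = segment ℝ (Q.v i') (Q.v j') := by
        apply G3 P hP Q hQ _ ⟨i, j, hij, rfl⟩ _ ⟨i', j', hij', rfl⟩
        refine ⟨x, y, hxy, ⟨?_, ?_⟩, ⟨?_, ?_⟩⟩
        · exact seg_half_sub (hσ ▸ hx.1)
        · exact seg_half_sub (hσ' ▸ hx.2)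
        · exact seg_half_sub (hσ ▸ hy.1)
        · exact seg_half_sub (hσ' ▸ hy.2)
      rcases segeq (vertex_ne (G1 P hP) hij) hSfull with ⟨e1, e2⟩ | ⟨e1, e2⟩
      · rw [hσ, hσ', e1, e2]
      · -- opposite halves : contradiction
        exfalso
        have hm : (2:ℝ)⁻¹ • (Q.v i' + Q.v j') = (2:ℝ)⁻¹ • (P.v i + P.v j) := by
          rw [e1, e2, add_comm]
        have hx2 : x ∈ segment ℝ (P.v j) ((2:ℝ)⁻¹ • (P.v i + P.v j)) := by
          have h7 := hσ' ▸ hx.2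
          rwa [hm, e1] at h7
        have hy2 : y ∈ segment ℝ (P.v j) ((2:ℝ)⁻¹ • (P.v i + P.v j)) := by
          have h7 := hσ' ▸ hy.2
          rwa [hm, e1] at h7
        have hxm := halves_inter (vertex_ne (G1 P hP) hij) (hσ ▸ hx.1) hx2
        have hym := halves_inter (vertex_ne (G1 P hP) hij) (hσ ▸ hy.1) hy2
        exact hxy (hxm.trans hym.symm)

lemma good_all {T₀ : Triangle} (hT₀ : T₀.Nondeg) : ∀ k, GoodT T₀ k := by
  intro k
  induction k with
  | zero => exact good_zero hT₀
  | succ k ih => exact good_succ ih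

/-- Adjacency of children of distinct parents lifts to the parents. -/
lemma adj_lift {T₀ : Triangle} {k : ℕ} (G : GoodT T₀ k) {P Q c d : Triangle}
    (hP : P ∈ BIter T₀ k) (hQ : Q ∈ BIter T₀ k) (hcP : c ∈ BSub P) (hdQ : d ∈ BSub Q)
    (hPQ : P ≠ Q) (h : Adjacent c d) : Adjacent P Q := by
  obtain ⟨G1, G2, G3⟩ := G
  obtain ⟨i, j, hij, rfl⟩ := hcP
  obtain ⟨i', j', hij', rfl⟩ := hdQ
  obtain ⟨hne, e, hec, hed⟩ := h
  obtain ⟨a, b, hab, rfl⟩ := hec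
  set x := (P.child i j).v a with hxdef
  set y := (P.child i j).v b with hydef
  have hxy : x ≠ y := vertex_ne (child_nondeg (G1 P hP) hij) hab
  have hxe : x ∈ segment ℝ ((P.child i j).v a) ((P.child i j).v b) := left_mem_segment _ _ _
  have hye : y ∈ segment ℝ ((P.child i j).v a) ((P.child i j).v b) := right_mem_segment _ _ _
  have hxc : x ∈ Tpts (P.child i j) := seg_subset_pts hab hxe
  have hyc : y ∈ Tpts (P.child i j) := seg_subset_pts hab hye
  have hxd : x ∈ Tpts (Q.child i' j') := by
    obtain ⟨a', b', hab', heq⟩ := hed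
    exact seg_subset_pts hab' (heq ▸ hxe)
  have hyd : y ∈ Tpts (Q.child i' j') := by
    obtain ⟨a', b', hab', heq⟩ := hed
    exact seg_subset_pts hab' (heq ▸ hye)
  have hxPQ := G2 P hP Q hQ hPQ ⟨child_subset hij hxc, child_subset hij' hxd⟩
  have hyPQ := G2 P hP Q hQ hPQ ⟨child_subset hij hyc, child_subset hij' hyd⟩
  have hσ := child_side_half (G1 P hP) hij ⟨a, b, hab, rfl⟩ hxy hxe hye hxPQ.1 hyPQ.1
  obtain ⟨a', b', hab', heq⟩ := hed
  have hσ' := child_side_half (G1 Q hQ) hij' ⟨a', b', hab', rfl⟩ hxy (heq ▸ hxe) (heq ▸ hye)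
    hxPQ.2 hyPQ.2
  have hSfull : segment ℝ (P.v i) (P.v j) = segment ℝ (Q.v i') (Q.v j') := by
    apply G3 P hP Q hQ _ ⟨i, j, hij, rfl⟩ _ ⟨i', j', hij', rfl⟩
    exact ⟨x, y, hxy, ⟨seg_half_sub (hσ ▸ hxe), seg_half_sub (hσ' ▸ heq ▸ hxe)⟩,
      ⟨seg_half_sub (hσ ▸ hye), seg_half_sub (hσ' ▸ heq ▸ hye)⟩⟩
  exact ⟨hPQ, segment ℝ (P.v i) (P.v j), ⟨i, j, hij, rfl⟩, ⟨i', j', hij', hSfull⟩⟩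

/-- if `s, t ∈ Bⁿ(T₀)` are adjacent, with family trees
`s = s_n ⊂ … ⊂ s₀ = T₀` and `t = t_n ⊂ … ⊂ t₀ = T₀`, and `m` is the largest index
`≤ n` with `s_m = t_m`, then `s_k = t_k` for all `k ≤ m` and `s_k` is adjacent to `t_k`
for all `m < k ≤ n`. -/
theorem stmt17 (T₀ : Triangle) (hT₀ : T₀.Nondeg) (n : ℕ)
    (s t : ℕ → Triangle) (hs0 : s 0 = T₀) (ht0 : t 0 = T₀)
    (hs : ∀ k < n, s (k + 1) ∈ BSub (s k)) (ht : ∀ k < n, t (k + 1) ∈ BSub (t k))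
    (hadj : Adjacent (s n) (t n))
    (m : ℕ) (hmn : m ≤ n) (hsm : s m = t m) (hmax : ∀ k ≤ n, s k = t k → k ≤ m) :
    (∀ k ≤ m, s k = t k) ∧ (∀ k, m < k → k ≤ n → Adjacent (s k) (t k)) := by
  have G := good_all hT₀
  have hsmem : ∀ k, k ≤ n → s k ∈ BIter T₀ k := by
    intro k
    induction k with
    | zero => intro _; simp [BIter, hs0]
    | succ k ih =>
      intro hk
      exact mem_BIter_succ.2 ⟨s k, ih (by omega), hs k (by omega)⟩
  have htmem : ∀ k, k ≤ n → t k ∈ BIter T₀ k := by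
    intro k
    induction k with
    | zero => intro _; simp [BIter, ht0]
    | succ k ih =>
      intro hk
      exact mem_BIter_succ.2 ⟨t k, ih (by omega), ht k (by omega)⟩
  have part1 : ∀ j k, k + j = m → s k = t k := by
    intro j
    induction j with
    | zero =>
      intro k hk
      rw [Nat.add_zero] at hk
      subst hk
      exact hsm
    | succ j ih =>
      intro k hk
      have he := ih (k+1) (by omega)
      have hkn : k < n := by omega
      have hc : s (k+1) ∈ BSub (s k) := hs k hkn
      have hd : s (k+1) ∈ BSub (t k) := by rw [he]; exact ht k hkn
      by_contra hne
      obtain ⟨Gk1, Gk2, Gk3⟩ := G k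
      have hsk := hsmem k (by omega)
      have htk := htmem k (by omega)
      obtain ⟨i0, j0, hij0, hceq⟩ := hc
      have hcnd : (s (k+1)).Nondeg := hceq ▸ child_nondeg (Gk1 _ hsk) hij0
      apply not_subset_bdry hcnd (s k)
      intro x hx
      have h1 : x ∈ Tpts (s k) := by
        rw [hceq] at hx
        exact child_subset hij0 hx
      have h2 : x ∈ Tpts (t k) := by
        obtain ⟨i1, j1, hij1, hdeq⟩ := hd
        rw [hdeq] at hx
        exact child_subset hij1 hx
      exact (Gk2 _ hsk _ htk hne ⟨h1, h2⟩).1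
  have part2 : ∀ j k, k + j = n → m < k → Adjacent (s k) (t k) := by
    intro j
    induction j with
    | zero =>
      intro k hk _
      rw [Nat.add_zero] at hk
      subst hk
      exact hadj
    | succ j ih =>
      intro k hk hmk
      have ha1 := ih (k+1) (by omega) (by omega)
      have hkn : k < n := by omega
      have hne : s k ≠ t k := fun h => absurd (hmax k (by omega) h) (by omega)
      exact adj_lift (G k) (hsmem k (by omega)) (htmem k (by omega)) (hs k hkn) (ht k hkn)
        hne ha1
  exact ⟨fun k hk => part1 (m - k) k (by omega), fun k h1 h2 => part2 (n - k) k (by omega) h1⟩
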